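/- For 𝓘 a symmetric positive definite 3×3 matrix, γ ∈ ℝ³ with (𝓘^{-1}γ, γ) < 1/ε as ε → ∞: the limit of (𝐈 + ε γ ⊗ 𝓘^{-1}γ)^{-1} as ε → ∞ equals 𝐈 − (1/(𝓘^{-1}γ,γ)) γ ⊗ 𝓘^{-1}γ, where (u ⊗ v)w = (v,w)u. Consequently the ε → ∞ limit of the L+R vector field 𝓘Ω̇ = 𝓘(𝓘 + εγ⊗γ)^{-1}(𝓘Ω × Ω) is the Veselova vector field 𝓘Ω̇ = 𝓘Ω × Ω − ((𝓘Ω × Ω, 𝓘^{-1}γ)/(𝓘^{-1}γ,γ))γ. -/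

import Mathlib

open Matrix Filter

lemma vecMulVec_mul_vecMulVec (u v u' v' : Fin 3 → ℝ) :
    vecMulVec u v * vecMulVec u' v' = (v ⬝ᵥ u') • vecMulVec u v' := by
  ext i j
  simp only [mul_apply, vecMulVec_apply, Matrix.smul_apply, dotProduct, smul_eq_mul,
    Finset.sum_mul, Finset.mul_sum]
  refine Finset.sum_congr rfl fun k _ => by ring

lemma vecMulVec_mulVec' (u v w : Fin 3 → ℝ) :
    vecMulVec u v *ᵥ w = (v ⬝ᵥ w) • u := by
  ext i
  simp only [mulVec, dotProduct, vecMulVec_apply, Pi.smul_apply, smul_eq_mul,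
    Finset.sum_mul, Finset.mul_sum]
  refine Finset.sum_congr rfl fun k _ => by ring

lemma vecMulVec_mul_mat (u v : Fin 3 → ℝ) (A : Matrix (Fin 3) (Fin 3) ℝ) :
    vecMulVec u v * A = vecMulVec u (v ᵥ* A) := by
  ext i j
  simp only [mul_apply, vecMulVec_apply, vecMul, dotProduct, Finset.mul_sum]
  refine Finset.sum_congr rfl fun k _ => by ring

theorem LplusR_limit_is_veselova
    (I : Matrix (Fin 3) (Fin 3) ℝ) (hIsymm : I.IsSymm) (hIpos : I.PosDef)
    (γ : Fin 3 → ℝ) (hγ : γ ≠ 0) :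
    Tendsto (fun ε : ℝ => (1 + ε • vecMulVec γ (I⁻¹ *ᵥ γ))⁻¹) atTop
      (nhds (1 - ((I⁻¹ *ᵥ γ) ⬝ᵥ γ)⁻¹ • vecMulVec γ (I⁻¹ *ᵥ γ))) ∧
    ∀ Ω : Fin 3 → ℝ,
      Tendsto
        (fun ε : ℝ =>
          (I * (I + ε • vecMulVec γ γ)⁻¹) *ᵥ (crossProduct (I *ᵥ Ω) Ω))
        atTop
        (nhds (crossProduct (I *ᵥ Ω) Ω -
          (((crossProduct (I *ᵥ Ω) Ω) ⬝ᵥ (I⁻¹ *ᵥ γ)) /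
            ((I⁻¹ *ᵥ γ) ⬝ᵥ γ)) • γ)) := by
  set M : Matrix (Fin 3) (Fin 3) ℝ := vecMulVec γ (I⁻¹ *ᵥ γ) with hM
  set c : ℝ := (I⁻¹ *ᵥ γ) ⬝ᵥ γ with hc
  have hdet : IsUnit I.det := hIpos.det_pos.ne'.isUnit
  have hcpos : 0 < c := by
    have := hIpos.inv.dotProduct_mulVec_pos hγ
    simpa [hc, dotProduct_comm, Matrix.dotProduct_mulVec, RCLike.inner_apply,
      dotProduct, mulVec, Finset.mul_sum, mul_comm] using this
  have hc0 : c ≠ 0 := ne_of_gt hcpos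
  have hMM : M * M = c • M := by
    rw [hM, _root_.vecMulVec_mul_vecMulVec, hc]
  -- Sherman–Morrison inverse for ε ≥ 0
  have hinv : ∀ ε : ℝ, 0 ≤ ε →
      (1 + ε • M)⁻¹ = 1 - (ε / (1 + ε * c)) • M := by
    intro ε hε
    have hd : (1 : ℝ) + ε * c ≠ 0 := by positivity
    apply Matrix.inv_eq_right_inv
    have : (1 + ε • M) * (1 - (ε / (1 + ε * c)) • M)
        = 1 + (ε - (ε / (1 + ε * c)) - ε * (ε / (1 + ε * c)) * c) • M := by
      simp only [Matrix.mul_sub, Matrix.add_mul, Matrix.one_mul, Matrix.mul_one,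
        Matrix.smul_mul, Matrix.mul_smul, hMM, smul_smul, sub_smul]
      module
    rw [this]
    have : ε - ε / (1 + ε * c) - ε * (ε / (1 + ε * c)) * c = 0 := by
      field_simp
      ring
    rw [this, zero_smul, add_zero]
  -- the scalar limit
  have hscal : Tendsto (fun ε : ℝ => ε / (1 + ε * c)) atTop (nhds c⁻¹) := by
    have h1 : Tendsto (fun ε : ℝ => (ε⁻¹ + c)⁻¹) atTop (nhds c⁻¹) := by
      have := (tendsto_inv_atTop_zero.add tendsto_const_nhds :
        Tendsto (fun ε : ℝ => ε⁻¹ + c) atTop (nhds (0 + c)))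
      rw [zero_add] at this
      exact (continuousAt_inv₀ hc0).tendsto.comp this
    refine h1.congr' ?_
    filter_upwards [eventually_gt_atTop (0 : ℝ)] with ε hε
    have hd : (1 : ℝ) + ε * c ≠ 0 := by positivity
    field_simp
  have hmat : Tendsto (fun ε : ℝ => 1 - (ε / (1 + ε * c)) • M) atTop
      (nhds (1 - c⁻¹ • M)) := by
    exact ((continuous_const.sub ((continuous_id.smul continuous_const))).tendsto c⁻¹).comp hscal
  have part1 : Tendsto (fun ε : ℝ => (1 + ε • M)⁻¹) atTop (nhds (1 - c⁻¹ • M)) := by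
    refine hmat.congr' ?_
    filter_upwards [eventually_ge_atTop (0 : ℝ)] with ε hε
    exact (hinv ε hε).symm
  refine ⟨part1, ?_⟩
  intro Ω
  set w : Fin 3 → ℝ := crossProduct (I *ᵥ Ω) Ω with hw
  -- key algebraic identity: I * (I + ε•γγᵀ)⁻¹ = (1 + ε•M)⁻¹
  have hkey : ∀ ε : ℝ, I * (I + ε • vecMulVec γ γ)⁻¹ = (1 + ε • M)⁻¹ := by
    intro ε
    have hfac : I + ε • vecMulVec γ γ = (1 + ε • M) * I := by
      rw [Matrix.add_mul, Matrix.one_mul, Matrix.smul_mul, hM, vecMulVec_mul_mat]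
      congr 2
      rw [← Matrix.mulVec_transpose, hIsymm.eq, Matrix.mulVec_mulVec,
        Matrix.mul_nonsing_inv _ hdet, Matrix.one_mulVec]
    rw [hfac, Matrix.mul_inv_rev, ← Matrix.mul_assoc,
      Matrix.mul_nonsing_inv _ hdet, Matrix.one_mul]
  have hcont : Tendsto (fun ε : ℝ => (1 + ε • M)⁻¹ *ᵥ w) atTop
      (nhds ((1 - c⁻¹ • M) *ᵥ w)) := by
    exact ((continuous_id.matrix_mulVec continuous_const).tendsto _).comp part1
  have hlim : (1 - c⁻¹ • M) *ᵥ w = w - (w ⬝ᵥ (I⁻¹ *ᵥ γ) / c) • γ := by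
    rw [Matrix.sub_mulVec, Matrix.one_mulVec, Matrix.smul_mulVec, hM,
      vecMulVec_mulVec', smul_smul, dotProduct_comm, div_eq_inv_mul]
  rw [hw] at hlim ⊢
  rw [← hlim]
  refine hcont.congr ?_
  intro ε
  rw [hkey]
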